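/- Fix an integer n ≥ 1 and reals α ≥ 1, β ≥ n, and let S_{α,β} = ∂T_{α,β} ⊂ ℝ^{n+1} be as in the construction below. Let N_k(S_{α,β}) denote the smallest number of sets of diameter at most 2^{−k} needed to cover S_{α,β}. Then the upper Minkowski dimension of S_{α,β} equals (n+1)β/(β+1); that is, limsup_{k→∞} log N_k(S_{α,β}) / (k·log 2) = (n+1)β/(β+1). -/

import Mathlib

open MeasureTheory Set

/-- The spacing `a_m = 2^{-m-⌊mβ⌋}` of the construction. -/
noncomputable def fractalSpacing (β : ℝ) (m : ℕ) : ℝ :=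
  (2 : ℝ) ^ (-(m : ℝ) - (⌊(m : ℝ) * β⌋ : ℝ))

/-- The right endpoints `y_{mj} = 2^{-m} + j·a_m`. -/
noncomputable def fractalPoint (β : ℝ) (m j : ℕ) : ℝ :=
  (2 : ℝ) ^ (-(m : ℝ)) + (j : ℝ) * fractalSpacing β m

/-- The rectangles `R_{mj} = [y_{mj} - C_m, y_{mj}] × [0, 2^{-m}]^n` with
`C_m = a_m^α / 2`. -/
noncomputable def fractalRect (n : ℕ) (α β : ℝ) (m j : ℕ) :
    Set (EuclideanSpace ℝ (Fin (n + 1))) :=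
  {x | x 0 ∈ Icc (fractalPoint β m j - (fractalSpacing β m) ^ α / 2) (fractalPoint β m j) ∧
       ∀ i : Fin (n + 1), i ≠ 0 → x i ∈ Icc (0 : ℝ) ((2 : ℝ) ^ (-(m : ℝ)))}

/-- The base cube `Q = [0,1]^n × [-1,0]` (last coordinate in `[-1,0]`). -/
def fractalBase (n : ℕ) : Set (EuclideanSpace ℝ (Fin (n + 1))) :=
  {x | (∀ i : Fin (n + 1), (i : ℕ) < n → x i ∈ Icc (0 : ℝ) 1) ∧
       x (Fin.last n) ∈ Icc (-1 : ℝ) 0}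

/-- The fractal domain `T_{α,β} = Q ∪ ⋃_{m≥1} ⋃_{j=1}^{2^{⌊mβ⌋}} R_{mj}`. -/
noncomputable def fractalDomain (n : ℕ) (α β : ℝ) :
    Set (EuclideanSpace ℝ (Fin (n + 1))) :=
  fractalBase n ∪
    ⋃ (m : ℕ) (_ : 1 ≤ m) (j : ℕ) (_ : 1 ≤ j) (_ : j ≤ 2 ^ (⌊(m : ℝ) * β⌋.toNat)),
      fractalRect n α β m j

/-- `N_k(E)`: the smallest number of sets of diameter at most `2^{-k}`
needed to cover `E` (by a finite family). -/
noncomputable def dyadicCoveringNumber {n : ℕ}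
    (E : Set (EuclideanSpace ℝ (Fin (n + 1)))) (k : ℕ) : ℕ :=
  sInf {N : ℕ | ∃ F : Finset (Set (EuclideanSpace ℝ (Fin (n + 1)))),
    F.card = N ∧ E ⊆ ⋃₀ (F : Set (Set (EuclideanSpace ℝ (Fin (n + 1))))) ∧
    ∀ U ∈ F, EMetric.diam U ≤ ENNReal.ofReal ((2 : ℝ) ^ (-(k : ℝ)))}


noncomputable section
open Filter

variable {n : ℕ} {α β : ℝ}

/-- Closed box in Euclidean space. -/
def mybox (n : ℕ) (a b : Fin (n+1) → ℝ) : Set (EuclideanSpace ℝ (Fin (n+1))) :=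
  {x | ∀ i, x i ∈ Icc (a i) (b i)}

-- basic helpers
lemma two_rpow_pos (x : ℝ) : (0:ℝ) < (2:ℝ)^x := Real.rpow_pos_of_pos (by norm_num) x
lemma two_rpow_mono {x y : ℝ} (h : x ≤ y) : (2:ℝ)^x ≤ (2:ℝ)^y :=
  Real.rpow_le_rpow_of_exponent_le one_le_two h
lemma two_rpow_add (x y : ℝ) : (2:ℝ)^(x+y) = (2:ℝ)^x * (2:ℝ)^y :=
  Real.rpow_add (by norm_num) x y

variable {n : ℕ} {α β : ℝ}

lemma floor_mul_nonneg (hβ : 0 ≤ β) (m : ℕ) : (0:ℤ) ≤ ⌊(m:ℝ) * β⌋ :=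
  Int.floor_nonneg.mpr (by positivity)

lemma toNat_floor_cast (hβ : 0 ≤ β) (m : ℕ) :
    ((⌊(m:ℝ) * β⌋.toNat : ℕ) : ℝ) = (⌊(m:ℝ) * β⌋ : ℝ) := by
  exact_mod_cast congrArg (Int.cast : ℤ → ℝ) (Int.toNat_of_nonneg (floor_mul_nonneg hβ m))

lemma spacing_pos (β : ℝ) (m : ℕ) : 0 < fractalSpacing β m := two_rpow_pos _

lemma cast_pow_floor (hβ : 0 ≤ β) (m : ℕ) :
    ((2 ^ (⌊(m:ℝ) * β⌋.toNat) : ℕ) : ℝ) = (2:ℝ) ^ ((⌊(m:ℝ) * β⌋ : ℝ)) := by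
  push_cast
  rw [← Real.rpow_natCast (2:ℝ) (⌊(m:ℝ) * β⌋.toNat), toNat_floor_cast hβ]

lemma max_point (hβ : 0 ≤ β) (m : ℕ) :
    ((2 ^ (⌊(m:ℝ) * β⌋.toNat) : ℕ) : ℝ) * fractalSpacing β m = (2:ℝ)^(-(m:ℝ)) := by
  rw [cast_pow_floor hβ, fractalSpacing, ← two_rpow_add]
  ring_nf

lemma point_le (hβ : 0 ≤ β) {m j : ℕ} (hj : j ≤ 2 ^ (⌊(m:ℝ) * β⌋.toNat)) :
    fractalPoint β m j ≤ (2:ℝ)^(-(m:ℝ)+1) := by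
  have h1 : (j:ℝ) * fractalSpacing β m ≤ (2:ℝ)^(-(m:ℝ)) := by
    rw [← max_point hβ m]
    exact mul_le_mul_of_nonneg_right (by exact_mod_cast hj) (spacing_pos β m).le
  have : (2:ℝ)^(-(m:ℝ)+1) = (2:ℝ)^(-(m:ℝ)) + (2:ℝ)^(-(m:ℝ)) := by
    rw [two_rpow_add]; ring
  rw [fractalPoint, this]
  linarith

lemma spacing_le_one (hβ : 0 ≤ β) (m : ℕ) : fractalSpacing β m ≤ 1 := by
  rw [fractalSpacing, ← Real.rpow_zero 2]
  apply two_rpow_mono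
  have := floor_mul_nonneg hβ m
  have : (0:ℝ) ≤ (⌊(m:ℝ) * β⌋ : ℝ) := by exact_mod_cast this
  have : (0:ℝ) ≤ (m:ℝ) := Nat.cast_nonneg m
  linarith [show (0:ℝ) ≤ (⌊(m:ℝ) * β⌋ : ℝ) by exact_mod_cast floor_mul_nonneg hβ m]

lemma width_le_half_spacing (hβ : 0 ≤ β) (hα : 1 ≤ α) (m : ℕ) :
    (fractalSpacing β m) ^ α / 2 ≤ fractalSpacing β m / 2 := by
  have h := Real.rpow_le_rpow_of_exponent_ge (spacing_pos β m) (spacing_le_one hβ m) hα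
  rw [Real.rpow_one] at h
  linarith

lemma width_nonneg (m : ℕ) : 0 ≤ (fractalSpacing β m) ^ α / 2 := by
  have := Real.rpow_nonneg (spacing_pos β m).le α
  linarith

lemma point_ge (hβ : 0 ≤ β) {m j : ℕ} (hj : 1 ≤ j) :
    (2:ℝ)^(-(m:ℝ)) + fractalSpacing β m ≤ fractalPoint β m j := by
  rw [fractalPoint]
  have : (1:ℝ) * fractalSpacing β m ≤ (j:ℝ) * fractalSpacing β m :=
    mul_le_mul_of_nonneg_right (by exact_mod_cast hj) (spacing_pos β m).le
  linarith

-- boxes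
def rectLo (n : ℕ) (α β : ℝ) (m j : ℕ) : Fin (n+1) → ℝ := fun i =>
  if i = 0 then fractalPoint β m j - (fractalSpacing β m) ^ α / 2 else 0

def rectHi (n : ℕ) (β : ℝ) (m j : ℕ) : Fin (n+1) → ℝ := fun i =>
  if i = 0 then fractalPoint β m j else (2:ℝ)^(-(m:ℝ))

def baseLo (n : ℕ) : Fin (n+1) → ℝ := fun i => if (i:ℕ) < n then 0 else -1
def baseHi (n : ℕ) : Fin (n+1) → ℝ := fun i => if (i:ℕ) < n then 1 else 0

lemma fin_not_lt_iff (i : Fin (n+1)) : ¬((i:ℕ) < n) ↔ i = Fin.last n := by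
  constructor
  · intro h
    have : (i:ℕ) = n := le_antisymm (Nat.lt_succ_iff.mp i.2) (le_of_not_gt h)
    exact Fin.ext this
  · rintro rfl; simp [Fin.last]

lemma fractalRect_eq (m j : ℕ) :
    fractalRect n α β m j = mybox n (rectLo n α β m j) (rectHi n β m j) := by
  ext x
  constructor
  · rintro ⟨h0, hi⟩ i
    by_cases h : i = 0
    · subst h; simpa [rectLo, rectHi] using h0
    · simpa [rectLo, rectHi, h] using hi i h
  · intro h
    refine ⟨by simpa [rectLo, rectHi] using h 0, fun i hi => by simpa [rectLo, rectHi, hi] using h i⟩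

lemma fractalBase_eq : fractalBase n = mybox n (baseLo n) (baseHi n) := by
  ext x
  constructor
  · rintro ⟨h1, h2⟩ i
    by_cases h : (i:ℕ) < n
    · simpa [baseLo, baseHi, h] using h1 i h
    · have : i = Fin.last n := (fin_not_lt_iff i).mp h
      subst this
      simpa [baseLo, baseHi, h] using h2
  · intro h
    constructor
    · intro i hi; simpa [baseLo, baseHi, hi] using h i
    · have h' := h (Fin.last n)
      have : ¬((Fin.last n : ℕ) < n) := by simp [Fin.last]
      simpa [baseLo, baseHi, this] using h'

lemma isClosed_mybox' (a b : Fin (n+1) → ℝ) : IsClosed (mybox n a b) := by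
  have : mybox n a b = WithLp.ofLp ⁻¹' Set.pi univ (fun i => Icc (a i) (b i)) :=
    Set.ext fun x => ⟨fun h i _ => h i, fun h i => h i (mem_univ i)⟩
  rw [this]
  exact (isClosed_set_pi fun i _ => isClosed_Icc).preimage (PiLp.continuous_ofLp 2 _)

lemma rect_subset_bigbox (hβ : 0 ≤ β) (hα : 1 ≤ α) {m j M : ℕ} (hj1 : 1 ≤ j)
    (hj2 : j ≤ 2 ^ (⌊(m:ℝ) * β⌋.toNat)) (hm : M + 1 ≤ m) :
    fractalRect n α β m j ⊆ mybox n (fun _ => 0) (fun _ => (2:ℝ)^(-(M:ℝ))) := by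
  intro x hx
  rw [fractalRect_eq] at hx
  have hmono : (2:ℝ)^(-(m:ℝ)) ≤ (2:ℝ)^(-(M:ℝ)) := by
    apply two_rpow_mono
    have : (M:ℝ) ≤ (m:ℝ) := by exact_mod_cast le_trans (Nat.le_succ M) hm
    linarith
  have hmono2 : (2:ℝ)^(-(m:ℝ)+1) ≤ (2:ℝ)^(-(M:ℝ)) := by
    apply two_rpow_mono
    have : (M:ℝ) + 1 ≤ (m:ℝ) := by exact_mod_cast hm
    linarith
  intro i
  have hxi := hx i
  by_cases h : i = 0
  · subst h
    norm_num [rectLo, rectHi] at hxi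
    refine ⟨?_, ?_⟩ <;> simp only
    · have h1 := point_ge hβ (m := m) hj1
      have h2 := width_le_half_spacing hβ hα (m := m)
      have h3 := (two_rpow_pos (-(m:ℝ))).le
      have h4 := (spacing_pos β m).le
      linarith [hxi.1]
    · exact le_trans hxi.2 (le_trans (point_le hβ hj2) hmono2)
  · simp only [rectLo, rectHi, if_neg h] at hxi
    exact ⟨hxi.1, le_trans hxi.2 hmono⟩

lemma frontier_subset_pieces (hα : 1 ≤ α) (hβ : 0 ≤ β) (M : ℕ) :
    frontier (fractalDomain n α β) ⊆
      (fractalBase n \ interior (fractalBase n)) ∪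
      (⋃ m ∈ Finset.Icc 1 M, ⋃ j ∈ Finset.Icc 1 (2^(⌊(m:ℝ)*β⌋.toNat)),
        (fractalRect n α β m j \ interior (fractalRect n α β m j))) ∪
      mybox n (fun _ => 0) (fun _ => (2:ℝ)^(-(M:ℝ))) := by
  set T := fractalDomain n α β with hT
  set A := fractalBase n ∪
      ((⋃ m ∈ Finset.Icc 1 M, ⋃ j ∈ Finset.Icc 1 (2^(⌊(m:ℝ)*β⌋.toNat)),
        fractalRect n α β m j) ∪
      mybox n (fun _ => 0) (fun _ => (2:ℝ)^(-(M:ℝ)))) with hA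
  have hTA : T ⊆ A := by
    rintro x (hx | hx)
    · exact Or.inl hx
    · simp only [Set.mem_iUnion] at hx
      obtain ⟨m, hm, j, hj1, hj2, hx⟩ := hx
      by_cases hmM : m ≤ M
      · refine Or.inr (Or.inl ?_)
        simp only [Set.mem_iUnion]
        exact ⟨m, Finset.mem_Icc.mpr ⟨hm, hmM⟩, j, Finset.mem_Icc.mpr ⟨hj1, hj2⟩, hx⟩
      · exact Or.inr (Or.inr (rect_subset_bigbox hβ hα hj1 hj2 (by omega) hx))
  have hAclosed : IsClosed A := by
    rw [hA]
    refine IsClosed.union (by rw [fractalBase_eq]; exact isClosed_mybox' _ _) (IsClosed.union ?_ (isClosed_mybox' _ _))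
    refine Set.Finite.isClosed_biUnion (Finset.finite_toSet _) (fun m _ => ?_)
    refine Set.Finite.isClosed_biUnion (Finset.finite_toSet _) (fun j _ => ?_)
    rw [fractalRect_eq]; exact isClosed_mybox' _ _
  intro x hx
  have hxA : x ∈ A := closure_minimal hTA hAclosed hx.1
  have hxnotint : x ∉ interior T := hx.2
  rw [hA] at hxA
  rcases hxA with hxb | hxr | hxc
  · exact Or.inl (Or.inl ⟨hxb, fun h => hxnotint (interior_mono (Set.subset_union_left) h)⟩)
  · refine Or.inl (Or.inr ?_)
    simp only [Set.mem_iUnion] at hxr ⊢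
    obtain ⟨m, hm, j, hj, hxr⟩ := hxr
    refine ⟨m, hm, j, hj, hxr, fun h => hxnotint ?_⟩
    have hsub : fractalRect n α β m j ⊆ T := by
      rw [hT, fractalDomain]
      intro y hy
      right
      simp only [Set.mem_iUnion]
      rcases Finset.mem_Icc.mp hm with ⟨hm1, _⟩
      rcases Finset.mem_Icc.mp hj with ⟨hj1, hj2⟩
      exact ⟨m, hm1, j, hj1, hj2, hy⟩
    exact interior_mono hsub h
  · exact Or.inr hxc

local instance myDecEq (n : ℕ) : DecidableEq (Set (EuclideanSpace ℝ (Fin (n+1)))) :=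
  Classical.decEq _

def gridBox (n K : ℕ) (σ : Fin (n+1) → ℤ) :
    Set (EuclideanSpace ℝ (Fin (n+1))) :=
  mybox n (fun i => (σ i : ℝ) * (2:ℝ)^(-(K:ℝ))) (fun i => ((σ i : ℝ)+1) * (2:ℝ)^(-(K:ℝ)))

def boxCover (n K : ℕ) (a b : Fin (n+1) → ℝ) :
    Finset (Set (EuclideanSpace ℝ (Fin (n+1)))) :=
  (Fintype.piFinset fun i => Finset.Icc ⌊a i * (2:ℝ)^(K:ℝ)⌋ ⌊b i * (2:ℝ)^(K:ℝ)⌋).image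
    (gridBox n K)

lemma interior_mybox (a b : Fin (n+1) → ℝ) :
    interior (mybox n a b) = WithLp.ofLp ⁻¹' Set.pi univ (fun i => Ioo (a i) (b i)) := by
  have : mybox n a b = WithLp.ofLp ⁻¹' Set.pi univ (fun i => Icc (a i) (b i)) :=
    Set.ext fun x => ⟨fun h i _ => h i, fun h i => h i (mem_univ i)⟩
  rw [this]
  have h2 := (PiLp.homeomorph 2 (fun _ : Fin (n+1) => ℝ)).preimage_interior
    (Set.pi univ (fun i => Icc (a i) (b i)))
  rw [interior_pi_set finite_univ] at h2
  simp only [interior_Icc] at h2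
  exact h2.symm

lemma frontier_mybox_subset (a b : Fin (n+1) → ℝ) {x : EuclideanSpace ℝ (Fin (n+1))}
    (hx : x ∈ mybox n a b) (hx2 : x ∉ interior (mybox n a b)) :
    ∃ i, x i = a i ∨ x i = b i := by
  rw [interior_mybox] at hx2
  by_contra h
  push_neg at h
  apply hx2
  intro i _
  rcases hx i with ⟨h1, h2⟩
  rcases h i with ⟨ha, hb⟩
  exact ⟨lt_of_le_of_ne h1 (Ne.symm ha), lt_of_le_of_ne h2 hb⟩

/-- The cover of all the faces of a box. -/
def faceCover (n K : ℕ) (a b : Fin (n+1) → ℝ) :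
    Finset (Set (EuclideanSpace ℝ (Fin (n+1)))) :=
  (Finset.univ : Finset (Fin (n+1) × Bool)).biUnion fun p =>
    boxCover n K (Function.update a p.1 (if p.2 then b p.1 else a p.1))
      (Function.update b p.1 (if p.2 then b p.1 else a p.1))

lemma boxCover_covers {K : ℕ} {a b : Fin (n+1) → ℝ}
    {x : EuclideanSpace ℝ (Fin (n+1))} (hx : x ∈ mybox n a b) :
    ∃ U ∈ boxCover n K a b, x ∈ U := by
  have hspos : (0:ℝ) < (2:ℝ)^(K:ℝ) := two_rpow_pos _
  have hinv : (2:ℝ)^(-(K:ℝ)) * (2:ℝ)^(K:ℝ) = 1 := by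
    rw [← two_rpow_add]; simp
  refine ⟨gridBox n K (fun i => ⌊x i * (2:ℝ)^(K:ℝ)⌋), ?_, ?_⟩
  · unfold boxCover
    apply Finset.mem_image_of_mem
    rw [Fintype.mem_piFinset]
    intro i
    rw [Finset.mem_Icc]
    exact ⟨Int.floor_mono (mul_le_mul_of_nonneg_right (hx i).1 hspos.le),
      Int.floor_mono (mul_le_mul_of_nonneg_right (hx i).2 hspos.le)⟩
  · intro i
    have h1 : (⌊x i * (2:ℝ)^(K:ℝ)⌋ : ℝ) ≤ x i * (2:ℝ)^(K:ℝ) := Int.floor_le _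
    have h2 : x i * (2:ℝ)^(K:ℝ) ≤ (⌊x i * (2:ℝ)^(K:ℝ)⌋ : ℝ) + 1 :=
      (Int.lt_floor_add_one _).le
    have hx' : x i = x i * (2:ℝ)^(K:ℝ) * (2:ℝ)^(-(K:ℝ)) := by
      rw [mul_assoc, mul_comm ((2:ℝ)^(K:ℝ)), hinv, mul_one]
    have hsp : (0:ℝ) ≤ (2:ℝ)^(-(K:ℝ)) := (two_rpow_pos _).le
    constructor
    · calc (⌊x i * (2:ℝ)^(K:ℝ)⌋ : ℝ) * (2:ℝ)^(-(K:ℝ))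
          ≤ x i * (2:ℝ)^(K:ℝ) * (2:ℝ)^(-(K:ℝ)) := mul_le_mul_of_nonneg_right h1 hsp
        _ = x i := hx'.symm
    · calc x i = x i * (2:ℝ)^(K:ℝ) * (2:ℝ)^(-(K:ℝ)) := hx'
        _ ≤ ((⌊x i * (2:ℝ)^(K:ℝ)⌋ : ℝ) + 1) * (2:ℝ)^(-(K:ℝ)) :=
            mul_le_mul_of_nonneg_right h2 hsp

lemma faceCover_covers {K : ℕ} {a b : Fin (n+1) → ℝ}
    {x : EuclideanSpace ℝ (Fin (n+1))} (hx : x ∈ mybox n a b)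
    (hx2 : x ∉ interior (mybox n a b)) :
    ∃ U ∈ faceCover n K a b, x ∈ U := by
  obtain ⟨i₀, hi₀⟩ := frontier_mybox_subset a b hx hx2
  have : ∃ s : Bool, x i₀ = (if s then b i₀ else a i₀) := by
    rcases hi₀ with h | h
    · exact ⟨false, by simpa using h⟩
    · exact ⟨true, by simpa using h⟩
  obtain ⟨s, hs⟩ := this
  set c := if s then b i₀ else a i₀ with hc
  have hx' : x ∈ mybox n (Function.update a i₀ c) (Function.update b i₀ c) := by
    intro i
    by_cases h : i = i₀
    · subst h
      simp only [Function.update_self]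
      exact ⟨le_of_eq hs.symm, le_of_eq hs⟩
    · simp only [Function.update_of_ne h]
      exact hx i
  obtain ⟨U, hU, hxU⟩ := boxCover_covers (K := K) hx'
  refine ⟨U, ?_, hxU⟩
  unfold faceCover
  rw [Finset.mem_biUnion]
  exact ⟨(i₀, s), Finset.mem_univ _, hU⟩

lemma dist_le_of_mem_gridBox {K : ℕ} {σ : Fin (n+1) → ℤ}
    {x y : EuclideanSpace ℝ (Fin (n+1))} (hx : x ∈ gridBox n K σ) (hy : y ∈ gridBox n K σ) :
    dist x y ≤ (n+1) * (2:ℝ)^(-(K:ℝ)) := by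
  have hspos : (0:ℝ) < (2:ℝ)^(-(K:ℝ)) := two_rpow_pos _
  have hcoord : ∀ i, dist (x i) (y i) ≤ (2:ℝ)^(-(K:ℝ)) := by
    intro i
    have hx1 : (σ i : ℝ) * (2:ℝ)^(-(K:ℝ)) ≤ x i := (hx i).1
    have hx2 : x i ≤ ((σ i : ℝ)+1) * (2:ℝ)^(-(K:ℝ)) := (hx i).2
    have hy1 : (σ i : ℝ) * (2:ℝ)^(-(K:ℝ)) ≤ y i := (hy i).1
    have hy2 : y i ≤ ((σ i : ℝ)+1) * (2:ℝ)^(-(K:ℝ)) := (hy i).2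
    rw [Real.dist_eq, abs_sub_le_iff]
    constructor <;> nlinarith
  rw [EuclideanSpace.dist_eq]
  have hsum : ∑ i, dist (x i) (y i) ^ 2 ≤ ((n:ℝ)+1) * ((2:ℝ)^(-(K:ℝ)))^2 := by
    calc ∑ i, dist (x i) (y i) ^ 2 ≤ ∑ _i : Fin (n+1), ((2:ℝ)^(-(K:ℝ)))^2 :=
          Finset.sum_le_sum fun i _ => pow_le_pow_left₀ dist_nonneg (hcoord i) 2
      _ = ((n:ℝ)+1) * ((2:ℝ)^(-(K:ℝ)))^2 := by
          rw [Finset.sum_const, Finset.card_univ, Fintype.card_fin, nsmul_eq_mul]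
          push_cast; ring
  calc Real.sqrt (∑ i, dist (x i) (y i) ^ 2) ≤ Real.sqrt (((n:ℝ)+1) * ((2:ℝ)^(-(K:ℝ)))^2) :=
        Real.sqrt_le_sqrt hsum
    _ ≤ Real.sqrt ((((n:ℝ)+1) * (2:ℝ)^(-(K:ℝ)))^2) := by
        apply Real.sqrt_le_sqrt; nlinarith [hspos.le, sq_nonneg ((2:ℝ)^(-(K:ℝ)))]
    _ = ((n:ℝ)+1) * (2:ℝ)^(-(K:ℝ)) := Real.sqrt_sq (by positivity)

lemma boxCover_diam {K : ℕ} {a b : Fin (n+1) → ℝ} {U} (hU : U ∈ boxCover n K a b) :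
    EMetric.diam U ≤ ENNReal.ofReal ((n+1) * (2:ℝ)^(-(K:ℝ))) := by
  unfold boxCover at hU
  rcases Finset.mem_image.mp hU with ⟨σ, _, rfl⟩
  apply EMetric.diam_le
  intro x hx y hy
  rw [edist_dist]
  exact ENNReal.ofReal_le_ofReal (dist_le_of_mem_gridBox hx hy)

lemma faceCover_diam {K : ℕ} {a b : Fin (n+1) → ℝ} {U} (hU : U ∈ faceCover n K a b) :
    EMetric.diam U ≤ ENNReal.ofReal ((n+1) * (2:ℝ)^(-(K:ℝ))) := by
  unfold faceCover at hU
  rcases Finset.mem_biUnion.mp hU with ⟨p, _, hU⟩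
  exact boxCover_diam hU

def MM (β : ℝ) (k : ℕ) : ℕ := ⌈(k:ℝ)/(β+1)⌉₊

def totalCover (n : ℕ) (α β : ℝ) (k : ℕ) :
    Finset (Set (EuclideanSpace ℝ (Fin (n+1)))) :=
  faceCover n (k+n+1) (baseLo n) (baseHi n) ∪
  ((Finset.Icc 1 (MM β k)).biUnion fun m =>
    (Finset.Icc 1 (2^(⌊(m:ℝ)*β⌋.toNat))).biUnion fun j =>
      faceCover n (k+n+1) (rectLo n α β m j) (rectHi n β m j)) ∪
  boxCover n (k+n+1) (fun _ => 0) (fun _ => (2:ℝ)^(-(MM β k : ℝ)))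

lemma totalCover_covers (hα : 1 ≤ α) (hβ : 0 ≤ β) (k : ℕ) :
    frontier (fractalDomain n α β) ⊆ ⋃₀ (totalCover n α β k : Set _) := by
  intro x hx
  have h := frontier_subset_pieces hα hβ (MM β k) hx
  rw [Set.mem_sUnion]
  rcases h with (⟨hx1, hx2⟩ | h) | h
  · rw [fractalBase_eq] at hx1 hx2
    obtain ⟨U, hU, hxU⟩ := faceCover_covers (K := k+n+1) hx1 hx2
    refine ⟨U, ?_, hxU⟩
    simp only [totalCover, Finset.coe_union, Set.mem_union, Finset.mem_coe]
    exact Or.inl (Or.inl hU)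
  · simp only [Set.mem_iUnion] at h
    obtain ⟨m, hm, j, hj, hx1, hx2⟩ := h
    rw [fractalRect_eq] at hx1 hx2
    obtain ⟨U, hU, hxU⟩ := faceCover_covers (K := k+n+1) hx1 hx2
    refine ⟨U, ?_, hxU⟩
    simp only [totalCover, Finset.coe_union, Set.mem_union, Finset.mem_coe]
    refine Or.inl (Or.inr ?_)
    rw [Finset.mem_biUnion]
    exact ⟨m, hm, by rw [Finset.mem_biUnion]; exact ⟨j, hj, hU⟩⟩
  · obtain ⟨U, hU, hxU⟩ := boxCover_covers (K := k+n+1) h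
    refine ⟨U, ?_, hxU⟩
    simp only [totalCover, Finset.coe_union, Set.mem_union, Finset.mem_coe]
    exact Or.inr hU

lemma np1_le_pow : ((n:ℝ)+1) ≤ (2:ℝ)^((n:ℝ)+1) := by
  have h : (2:ℝ)^((n:ℝ)+1) = (2:ℝ)^((n+1:ℕ):ℝ) := by push_cast; ring_nf
  rw [h, Real.rpow_natCast]
  exact_mod_cast (Nat.lt_two_pow_self (n := n+1)).le

lemma totalCover_diam {k : ℕ} {U} (hU : U ∈ totalCover n α β k) :
    EMetric.diam U ≤ ENNReal.ofReal ((2:ℝ)^(-(k:ℝ))) := by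
  have hkey : ((n:ℝ)+1) * (2:ℝ)^(-((k+n+1 : ℕ):ℝ)) ≤ (2:ℝ)^(-(k:ℝ)) := by
    have h : (2:ℝ)^(-(k:ℝ)) = (2:ℝ)^((n:ℝ)+1) * (2:ℝ)^(-((k+n+1:ℕ):ℝ)) := by
      rw [← two_rpow_add]
      push_cast
      ring_nf
    rw [h]
    exact mul_le_mul_of_nonneg_right np1_le_pow (two_rpow_pos _).le
  have h2 : ∀ V : Set (EuclideanSpace ℝ (Fin (n+1))),
      EMetric.diam V ≤ ENNReal.ofReal (((n:ℝ)+1) * (2:ℝ)^(-((k+n+1:ℕ):ℝ))) →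
      EMetric.diam V ≤ ENNReal.ofReal ((2:ℝ)^(-(k:ℝ))) := fun V h =>
    le_trans h (ENNReal.ofReal_le_ofReal hkey)
  simp only [totalCover, Finset.mem_union] at hU
  rcases hU with (hU | hU) | hU
  · exact h2 U (faceCover_diam hU)
  · rw [Finset.mem_biUnion] at hU
    obtain ⟨m, _, hU⟩ := hU
    rw [Finset.mem_biUnion] at hU
    obtain ⟨j, _, hU⟩ := hU
    exact h2 U (faceCover_diam hU)
  · exact h2 U (boxCover_diam hU)

lemma boxCover_card_nat (K : ℕ) (a b : Fin (n+1) → ℝ) :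
    (boxCover n K a b).card ≤
      ∏ i, (⌊b i * (2:ℝ)^(K:ℝ)⌋ + 1 - ⌊a i * (2:ℝ)^(K:ℝ)⌋).toNat := by
  unfold boxCover
  refine le_trans Finset.card_image_le ?_
  rw [Fintype.card_piFinset]
  exact le_of_eq (Finset.prod_congr rfl fun i _ => Int.card_Icc _ _)

lemma count_cast_le {K : ℕ} {u v : ℝ} (huv : u ≤ v) :
    (((⌊v * (2:ℝ)^(K:ℝ)⌋ + 1 - ⌊u * (2:ℝ)^(K:ℝ)⌋).toNat : ℕ) : ℝ) ≤
      (v - u) * (2:ℝ)^(K:ℝ) + 2 := by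
  have hpos : (0:ℝ) < (2:ℝ)^(K:ℝ) := two_rpow_pos _
  have hb : (0:ℝ) ≤ (v - u) * (2:ℝ)^(K:ℝ) := mul_nonneg (by linarith) hpos.le
  set q : ℤ := ⌊v * (2:ℝ)^(K:ℝ)⌋ + 1 - ⌊u * (2:ℝ)^(K:ℝ)⌋ with hq
  rcases le_or_gt q 0 with h | h
  · rw [Int.toNat_of_nonpos h]
    push_cast
    linarith
  · have hcast : ((q.toNat : ℕ) : ℝ) = ((q:ℤ) : ℝ) := by
      exact_mod_cast congrArg (Int.cast : ℤ → ℝ) (Int.toNat_of_nonneg h.le)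
    rw [hcast]
    have h1 : (⌊v * (2:ℝ)^(K:ℝ)⌋ : ℝ) ≤ v * (2:ℝ)^(K:ℝ) := Int.floor_le _
    have h2 : u * (2:ℝ)^(K:ℝ) - 1 ≤ (⌊u * (2:ℝ)^(K:ℝ)⌋ : ℝ) := by
      linarith [Int.lt_floor_add_one (u * (2:ℝ)^(K:ℝ))]
    push_cast [hq]
    nlinarith

lemma count_cast_degenerate {K : ℕ} (c : ℝ) :
    (((⌊c * (2:ℝ)^(K:ℝ)⌋ + 1 - ⌊c * (2:ℝ)^(K:ℝ)⌋).toNat : ℕ)) = 1 := by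
  simp

lemma boxCover_card_le (K : ℕ) (a b : Fin (n+1) → ℝ) (L : ℝ)
    (hab : ∀ i, a i ≤ b i) (hL : ∀ i, (b i - a i) * (2:ℝ)^(K:ℝ) + 2 ≤ L) :
    ((boxCover n K a b).card : ℝ) ≤ L^(n+1) := by
  have hL0 : 0 ≤ L := le_trans (by positivity) (le_trans (by
      have := mul_nonneg (sub_nonneg.mpr (hab 0)) (two_rpow_pos (K:ℝ)).le
      linarith : (0:ℝ) ≤ (b 0 - a 0) * (2:ℝ)^(K:ℝ) + 2) (hL 0))
  calc ((boxCover n K a b).card : ℝ)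
      ≤ ((∏ i, (⌊b i * (2:ℝ)^(K:ℝ)⌋ + 1 - ⌊a i * (2:ℝ)^(K:ℝ)⌋).toNat : ℕ) : ℝ) := by
        exact_mod_cast boxCover_card_nat K a b
    _ = ∏ i, (((⌊b i * (2:ℝ)^(K:ℝ)⌋ + 1 - ⌊a i * (2:ℝ)^(K:ℝ)⌋).toNat : ℕ) : ℝ) := by
        push_cast; rfl
    _ ≤ ∏ _i : Fin (n+1), L :=
        Finset.prod_le_prod (fun i _ => Nat.cast_nonneg _)
          (fun i _ => le_trans (count_cast_le (hab i)) (hL i))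
    _ = L^(n+1) := by rw [Finset.prod_const, Finset.card_univ, Fintype.card_fin]

lemma faceCover_card_le (K : ℕ) (a b : Fin (n+1) → ℝ) (L : ℝ)
    (hab : ∀ i, a i ≤ b i) (hL : ∀ i, (b i - a i) * (2:ℝ)^(K:ℝ) + 2 ≤ L) :
    ((faceCover n K a b).card : ℝ) ≤ (2*((n:ℝ)+1)) * L^n := by
  have hL0 : 0 ≤ L := le_trans (by positivity) (le_trans (by
      have := mul_nonneg (sub_nonneg.mpr (hab 0)) (two_rpow_pos (K:ℝ)).le
      linarith : (0:ℝ) ≤ (b 0 - a 0) * (2:ℝ)^(K:ℝ) + 2) (hL 0))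
  have hface : ∀ p : Fin (n+1) × Bool,
      ((boxCover n K (Function.update a p.1 (if p.2 then b p.1 else a p.1))
        (Function.update b p.1 (if p.2 then b p.1 else a p.1))).card : ℝ) ≤ L^n := by
    intro p
    set c := if p.2 then b p.1 else a p.1 with hc
    set a' := Function.update a p.1 c with ha'
    set b' := Function.update b p.1 c with hb'
    have hcount : ∀ i, (((⌊b' i * (2:ℝ)^(K:ℝ)⌋ + 1 - ⌊a' i * (2:ℝ)^(K:ℝ)⌋).toNat : ℕ) : ℝ)
        ≤ if i = p.1 then 1 else L := by
      intro i
      by_cases h : i = p.1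
      · subst h
        rw [if_pos rfl, ha', hb']
        simp only [Function.update_self]
        rw [count_cast_degenerate]
        norm_num
      · rw [if_neg h, ha', hb']
        simp only [Function.update_of_ne h]
        exact le_trans (count_cast_le (hab i)) (hL i)
    calc ((boxCover n K a' b').card : ℝ)
        ≤ ((∏ i, (⌊b' i * (2:ℝ)^(K:ℝ)⌋ + 1 - ⌊a' i * (2:ℝ)^(K:ℝ)⌋).toNat : ℕ) : ℝ) := by
          exact_mod_cast boxCover_card_nat K a' b'
      _ = ∏ i, (((⌊b' i * (2:ℝ)^(K:ℝ)⌋ + 1 - ⌊a' i * (2:ℝ)^(K:ℝ)⌋).toNat : ℕ) : ℝ) := by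
          push_cast; rfl
      _ ≤ ∏ i, (if i = p.1 then 1 else L) :=
          Finset.prod_le_prod (fun i _ => Nat.cast_nonneg _) (fun i _ => hcount i)
      _ ≤ L^n := by
          have hsplit := Finset.mul_prod_erase Finset.univ
            (fun i => if i = p.1 then (1:ℝ) else L) (Finset.mem_univ p.1)
          rw [← hsplit]
          simp only [if_pos rfl, one_mul]
          have : ∏ i ∈ Finset.univ.erase p.1, (if i = p.1 then (1:ℝ) else L)
              = ∏ _i ∈ Finset.univ.erase p.1, L :=
            Finset.prod_congr rfl (fun i hi => if_neg (Finset.ne_of_mem_erase hi))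
          rw [this, Finset.prod_const, Finset.card_erase_of_mem (Finset.mem_univ _),
            Finset.card_univ, Fintype.card_fin]
          norm_num
  calc ((faceCover n K a b).card : ℝ)
      ≤ ∑ p : Fin (n+1) × Bool, ((boxCover n K
          (Function.update a p.1 (if p.2 then b p.1 else a p.1))
          (Function.update b p.1 (if p.2 then b p.1 else a p.1))).card : ℝ) := by
        have := Finset.card_biUnion_le (s := (Finset.univ : Finset (Fin (n+1) × Bool)))
          (t := fun p => boxCover n K
            (Function.update a p.1 (if p.2 then b p.1 else a p.1))
            (Function.update b p.1 (if p.2 then b p.1 else a p.1)))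
        unfold faceCover
        exact_mod_cast this
    _ ≤ ∑ _p : Fin (n+1) × Bool, L^n := Finset.sum_le_sum (fun p _ => hface p)
    _ = (2*((n:ℝ)+1)) * L^n := by
        rw [Finset.sum_const, Finset.card_univ, Fintype.card_prod, Fintype.card_fin,
          Fintype.card_bool, nsmul_eq_mul]
        push_cast; ring

lemma rpow_pow (y : ℝ) (m : ℕ) : ((2:ℝ)^y)^m = (2:ℝ)^(y * m) := by
  rw [Real.rpow_mul (by norm_num : (0:ℝ) ≤ 2), Real.rpow_natCast]

lemma two_le_two_rpow {x : ℝ} (hx : 1 ≤ x) : (2:ℝ) ≤ (2:ℝ)^x :=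
  le_trans (le_of_eq (Real.rpow_one 2).symm) (two_rpow_mono hx)

set_option maxHeartbeats 1000000 in
lemma totalCover_card_le (hn : 1 ≤ n) (hα : 1 ≤ α) (hβ : (n:ℝ) ≤ β) {k : ℕ} (hk : 1 ≤ k) :
    ((totalCover n α β k).card : ℝ) ≤
      (2*((n:ℝ)+1) + 1) * (2:ℝ)^(β + ((n:ℝ)+2)*((n:ℝ)+1)) * ((k:ℝ)+2) *
        (2:ℝ)^((k:ℝ) * (((n:ℝ)+1)*β/(β+1))) := by
  have hβ0 : (0:ℝ) ≤ β := le_trans (by exact_mod_cast Nat.zero_le n) hβ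
  have hβ1 : (0:ℝ) < β + 1 := by linarith
  have hn1 : (1:ℝ) ≤ (n:ℝ) := by exact_mod_cast hn
  set K := k + n + 1 with hK
  set M := MM β k with hM
  set D := ((n:ℝ)+1)*β/(β+1) with hD
  have hM1 : (k:ℝ)/(β+1) ≤ (M:ℝ) := Nat.le_ceil _
  have hM2 : (M:ℝ) ≤ (k:ℝ)/(β+1) + 1 := by
    have := Nat.ceil_lt_add_one (a := (k:ℝ)/(β+1)) (by positivity)
    rw [hM, MM]
    exact_mod_cast this.le
  have hMk : M ≤ k := by
    rw [hM, MM]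
    apply Nat.ceil_le.mpr
    calc (k:ℝ)/(β+1) ≤ (k:ℝ)/1 := by
          apply div_le_div_of_nonneg_left (by positivity) (by norm_num)
          linarith
      _ = (k:ℝ) := by norm_num
  have hkD : (k:ℝ) * D = (k:ℝ)*n + ((k:ℝ)/(β+1))*(β-(n:ℝ)) := by
    rw [hD]; field_simp; ring
  have hkD2 : (k:ℝ) * D = ((n:ℝ)+1) * ((k:ℝ) - (k:ℝ)/(β+1)) := by
    rw [hD]; field_simp; ring
  have hQ : (0:ℝ) ≤ (k:ℝ)/(β+1) := by positivity
  -- piece 1 : base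
  have hbase : ((faceCover n K (baseLo n) (baseHi n)).card : ℝ)
      ≤ (2*((n:ℝ)+1)) * (2:ℝ)^(((K:ℝ)+1) * n) := by
    have h2K : (2:ℝ) ≤ (2:ℝ)^(K:ℝ) := by
      apply two_le_two_rpow
      have : (1:ℕ) ≤ K := by omega
      exact_mod_cast this
    have := faceCover_card_le (n := n) K (baseLo n) (baseHi n) ((2:ℝ)^((K:ℝ)+1))
      (fun i => by by_cases h : (i:ℕ) < n <;> simp [baseLo, baseHi, h])
      (fun i => by
        have hlen : baseHi n i - baseLo n i ≤ 1 := by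
          by_cases h : (i:ℕ) < n <;> simp [baseLo, baseHi, h] <;> norm_num
        have h1 : (baseHi n i - baseLo n i) * (2:ℝ)^(K:ℝ) ≤ 1 * (2:ℝ)^(K:ℝ) :=
          mul_le_mul_of_nonneg_right hlen (two_rpow_pos _).le
        have h2 : (2:ℝ)^((K:ℝ)+1) = (2:ℝ)^(K:ℝ) + (2:ℝ)^(K:ℝ) := by
          rw [two_rpow_add]; ring
        linarith)
    calc ((faceCover n K (baseLo n) (baseHi n)).card : ℝ)
        ≤ (2*((n:ℝ)+1)) * ((2:ℝ)^((K:ℝ)+1))^n := this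
      _ = (2*((n:ℝ)+1)) * (2:ℝ)^(((K:ℝ)+1) * n) := by rw [rpow_pow]
  -- piece 2 : rects
  have hrect : ∀ m j : ℕ, 1 ≤ m → m ≤ M →
      ((faceCover n K (rectLo n α β m j) (rectHi n β m j)).card : ℝ)
        ≤ (2*((n:ℝ)+1)) * (2:ℝ)^(((K:ℝ)-m+1) * n) := by
    intro m j hm1 hmM
    have hmK : (m:ℝ) + 2 ≤ (K:ℝ) := by
      have : m + 2 ≤ K := by omega
      exact_mod_cast this
    have h2Km : (2:ℝ) ≤ (2:ℝ)^((K:ℝ)-(m:ℝ)-1) := by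
      apply two_le_two_rpow
      linarith
    have hCsm : (fractalSpacing β m)^α/2 ≤ (2:ℝ)^(-(m:ℝ)-1) := by
      have h1 := width_le_half_spacing hβ0 hα m
      have h2 : fractalSpacing β m ≤ (2:ℝ)^(-(m:ℝ)) := by
        rw [fractalSpacing]
        apply two_rpow_mono
        have : (0:ℝ) ≤ (⌊(m:ℝ)*β⌋:ℝ) := by exact_mod_cast floor_mul_nonneg hβ0 m
        linarith
      have h3 : (2:ℝ)^(-(m:ℝ)-1) = (2:ℝ)^(-(m:ℝ))/2 := by
        rw [show -(m:ℝ)-1 = -(m:ℝ) + (-1) by ring, two_rpow_add]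
        rw [Real.rpow_neg_one]
        ring
      rw [h3]
      linarith
    have hLbound : ∀ i, (rectHi n β m j i - rectLo n α β m j i) * (2:ℝ)^(K:ℝ) + 2
        ≤ (2:ℝ)^((K:ℝ)-(m:ℝ)+1) := by
      intro i
      have hsplit : (2:ℝ)^((K:ℝ)-(m:ℝ)+1) = (2:ℝ)^((K:ℝ)-(m:ℝ)-1) + (2:ℝ)^((K:ℝ)-(m:ℝ)-1)
          + (2:ℝ)^((K:ℝ)-(m:ℝ)-1) + (2:ℝ)^((K:ℝ)-(m:ℝ)-1) := by
        rw [show (K:ℝ)-(m:ℝ)+1 = ((K:ℝ)-(m:ℝ)-1) + 2 by ring, two_rpow_add]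
        rw [show ((2:ℝ)^(2:ℝ)) = 4 by
          rw [show (2:ℝ) = ((2:ℕ):ℝ) by norm_num, Real.rpow_natCast]; norm_num]
        ring
      by_cases h : i = 0
      · subst h
        have hlen : rectHi n β m j 0 - rectLo n α β m j 0 = (fractalSpacing β m)^α/2 := by
          simp [rectLo, rectHi]
        rw [hlen]
        have : (fractalSpacing β m)^α/2 * (2:ℝ)^(K:ℝ) ≤ (2:ℝ)^(-(m:ℝ)-1) * (2:ℝ)^(K:ℝ) :=
          mul_le_mul_of_nonneg_right hCsm (two_rpow_pos _).le
        rw [← two_rpow_add] at this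
        have heq : -(m:ℝ)-1+(K:ℝ) = (K:ℝ)-(m:ℝ)-1 := by ring
        rw [heq] at this
        linarith
      · have hlen : rectHi n β m j i - rectLo n α β m j i = (2:ℝ)^(-(m:ℝ)) := by
          simp [rectLo, rectHi, h]
        rw [hlen, ← two_rpow_add]
        have heq : -(m:ℝ)+(K:ℝ) = ((K:ℝ)-(m:ℝ)-1) + 1 := by ring
        rw [heq, two_rpow_add, Real.rpow_one]
        linarith
    have hab : ∀ i, rectLo n α β m j i ≤ rectHi n β m j i := by
      intro i
      by_cases h : i = 0
      · subst h
        have := width_nonneg (α := α) (β := β) (m := m)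
        simp only [rectLo, rectHi, if_pos rfl]
        norm_num
        linarith
      · simp only [rectLo, rectHi, if_neg h]
        exact (two_rpow_pos _).le
    have := faceCover_card_le (n := n) K _ _ ((2:ℝ)^((K:ℝ)-(m:ℝ)+1)) hab hLbound
    calc ((faceCover n K (rectLo n α β m j) (rectHi n β m j)).card : ℝ)
        ≤ (2*((n:ℝ)+1)) * ((2:ℝ)^((K:ℝ)-(m:ℝ)+1))^n := this
      _ = (2*((n:ℝ)+1)) * (2:ℝ)^(((K:ℝ)-(m:ℝ)+1) * n) := by rw [rpow_pow]
  -- piece 3 : big cube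
  have hbig : ((boxCover n K (fun _ => 0) (fun _ => (2:ℝ)^(-(M:ℝ)))).card : ℝ)
      ≤ (2:ℝ)^(((K:ℝ)-(M:ℝ)+1) * ((n:ℕ)+1)) := by
    have hKM : (M:ℝ) + 1 ≤ (K:ℝ) := by
      have : M + 1 ≤ K := by omega
      exact_mod_cast this
    have h2KM : (2:ℝ) ≤ (2:ℝ)^((K:ℝ)-(M:ℝ)) := two_le_two_rpow (by linarith)
    have := boxCover_card_le (n := n) K (fun _ => 0) (fun _ => (2:ℝ)^(-(M:ℝ)))
      ((2:ℝ)^((K:ℝ)-(M:ℝ)+1))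
      (fun i => (two_rpow_pos _).le)
      (fun i => by
        have h1 : ((2:ℝ)^(-(M:ℝ)) - 0) * (2:ℝ)^(K:ℝ) = (2:ℝ)^((K:ℝ)-(M:ℝ)) := by
          rw [sub_zero, ← two_rpow_add]; ring_nf
        have h2 : (2:ℝ)^((K:ℝ)-(M:ℝ)+1) = (2:ℝ)^((K:ℝ)-(M:ℝ)) + (2:ℝ)^((K:ℝ)-(M:ℝ)) := by
          rw [two_rpow_add, Real.rpow_one]; ring
        rw [h1, h2]
        linarith)
    calc ((boxCover n K (fun _ => 0) (fun _ => (2:ℝ)^(-(M:ℝ)))).card : ℝ)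
        ≤ ((2:ℝ)^((K:ℝ)-(M:ℝ)+1))^((n:ℕ)+1) := this
      _ = (2:ℝ)^(((K:ℝ)-(M:ℝ)+1) * ((n:ℕ)+1)) := by rw [rpow_pow]; norm_num
  -- level sums
  have hlevel : (((Finset.Icc 1 M).biUnion fun m =>
      (Finset.Icc 1 (2^(⌊(m:ℝ)*β⌋.toNat))).biUnion fun j =>
        faceCover n K (rectLo n α β m j) (rectHi n β m j)).card : ℝ)
      ≤ (k:ℝ) * (2*((n:ℝ)+1)) * (2:ℝ)^((M:ℝ)*β + ((K:ℝ)-(M:ℝ)+1)*n) := by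
    have hterm : ∀ m ∈ Finset.Icc 1 M,
        ((((Finset.Icc 1 (2^(⌊(m:ℝ)*β⌋.toNat))).biUnion fun j =>
          faceCover n K (rectLo n α β m j) (rectHi n β m j)).card : ℝ))
        ≤ (2*((n:ℝ)+1)) * (2:ℝ)^((M:ℝ)*β + ((K:ℝ)-(M:ℝ)+1)*n) := by
      intro m hm
      rcases Finset.mem_Icc.mp hm with ⟨hm1, hmM⟩
      have hmr : (m:ℝ) ≤ (M:ℝ) := by exact_mod_cast hmM
      calc ((((Finset.Icc 1 (2^(⌊(m:ℝ)*β⌋.toNat))).biUnion fun j =>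
            faceCover n K (rectLo n α β m j) (rectHi n β m j)).card : ℝ))
          ≤ ∑ j ∈ Finset.Icc 1 (2^(⌊(m:ℝ)*β⌋.toNat)),
              ((faceCover n K (rectLo n α β m j) (rectHi n β m j)).card : ℝ) := by
            exact_mod_cast Finset.card_biUnion_le
        _ ≤ ∑ _j ∈ Finset.Icc 1 (2^(⌊(m:ℝ)*β⌋.toNat)),
              (2*((n:ℝ)+1)) * (2:ℝ)^(((K:ℝ)-(m:ℝ)+1) * n) :=
            Finset.sum_le_sum (fun j _ => hrect m j hm1 hmM)
        _ = ((2^(⌊(m:ℝ)*β⌋.toNat) : ℕ) : ℝ) * ((2*((n:ℝ)+1)) * (2:ℝ)^(((K:ℝ)-(m:ℝ)+1) * n)) := by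
            rw [Finset.sum_const, Nat.card_Icc, nsmul_eq_mul]
            norm_num
        _ = (2*((n:ℝ)+1)) * ((2:ℝ)^((⌊(m:ℝ)*β⌋:ℝ)) * (2:ℝ)^(((K:ℝ)-(m:ℝ)+1) * n)) := by
            rw [cast_pow_floor hβ0]; ring
        _ = (2*((n:ℝ)+1)) * (2:ℝ)^((⌊(m:ℝ)*β⌋:ℝ) + ((K:ℝ)-(m:ℝ)+1) * n) := by
            rw [two_rpow_add]
        _ ≤ (2*((n:ℝ)+1)) * (2:ℝ)^((M:ℝ)*β + ((K:ℝ)-(M:ℝ)+1)*n) := by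
            apply mul_le_mul_of_nonneg_left _ (by positivity)
            apply two_rpow_mono
            have hfl : ((⌊(m:ℝ)*β⌋:ℝ)) ≤ (m:ℝ)*β := Int.floor_le _
            have hmono : ((M:ℝ)-(m:ℝ)) * (β - (n:ℝ)) ≥ 0 :=
              mul_nonneg (by linarith) (by linarith)
            nlinarith
    calc (((Finset.Icc 1 M).biUnion fun m =>
        (Finset.Icc 1 (2^(⌊(m:ℝ)*β⌋.toNat))).biUnion fun j =>
          faceCover n K (rectLo n α β m j) (rectHi n β m j)).card : ℝ)
        ≤ ∑ m ∈ Finset.Icc 1 M, ((((Finset.Icc 1 (2^(⌊(m:ℝ)*β⌋.toNat))).biUnion fun j =>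
            faceCover n K (rectLo n α β m j) (rectHi n β m j)).card : ℝ)) := by
          exact_mod_cast Finset.card_biUnion_le
      _ ≤ ∑ _m ∈ Finset.Icc 1 M, (2*((n:ℝ)+1)) * (2:ℝ)^((M:ℝ)*β + ((K:ℝ)-(M:ℝ)+1)*n) :=
          Finset.sum_le_sum hterm
      _ = (M:ℝ) * ((2*((n:ℝ)+1)) * (2:ℝ)^((M:ℝ)*β + ((K:ℝ)-(M:ℝ)+1)*n)) := by
          rw [Finset.sum_const, Nat.card_Icc, nsmul_eq_mul]
          norm_num
      _ ≤ (k:ℝ) * (2*((n:ℝ)+1)) * (2:ℝ)^((M:ℝ)*β + ((K:ℝ)-(M:ℝ)+1)*n) := by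
          have hMkr : (M:ℝ) ≤ (k:ℝ) := by exact_mod_cast hMk
          rw [← mul_assoc]
          apply mul_le_mul_of_nonneg_right _ (two_rpow_pos _).le
          apply mul_le_mul_of_nonneg_right hMkr (by positivity)
  -- exponent estimates
  have hKr : (K:ℝ) = (k:ℝ) + (n:ℝ) + 1 := by rw [hK]; push_cast; ring
  have hprod : (0:ℝ) ≤ ((k:ℝ)/(β+1)) * (β - (n:ℝ)) := mul_nonneg hQ (by linarith)
  have e1 : ((K:ℝ)+1)*(n:ℝ) ≤ (k:ℝ)*D + β + ((n:ℝ)+2)*((n:ℝ)+1) := by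
    rw [hKr]
    linarith [hkD, hprod]
  have e2 : (M:ℝ)*β + ((K:ℝ)-(M:ℝ)+1)*(n:ℝ) ≤ (k:ℝ)*D + β + ((n:ℝ)+2)*((n:ℝ)+1) := by
    rw [hKr]
    have h := mul_le_mul_of_nonneg_right hM2 (show (0:ℝ) ≤ β - (n:ℝ) by linarith)
    linarith [hkD, h]
  have e3 : ((K:ℝ)-(M:ℝ)+1)*(((n:ℕ):ℝ)+1) ≤ (k:ℝ)*D + β + ((n:ℝ)+2)*((n:ℝ)+1) := by
    rw [hKr]
    have h := mul_le_mul_of_nonneg_right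
      (show (k:ℝ) - (M:ℝ) ≤ (k:ℝ) - (k:ℝ)/(β+1) by linarith)
      (show (0:ℝ) ≤ (n:ℝ)+1 by linarith)
    linarith [hkD2, h]
  -- combine
  set G : ℝ := (2:ℝ)^(β + ((n:ℝ)+2)*((n:ℝ)+1)) with hG
  set P : ℝ := (2:ℝ)^((k:ℝ)*D) with hP
  have hGP : ∀ e : ℝ, e ≤ (k:ℝ)*D + β + ((n:ℝ)+2)*((n:ℝ)+1) → (2:ℝ)^e ≤ G * P := by
    intro e he
    rw [hG, hP, ← two_rpow_add]
    exact le_trans (two_rpow_mono he) (le_of_eq (by ring_nf))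
  have hsplit : ((totalCover n α β k).card : ℝ)
      ≤ ((faceCover n K (baseLo n) (baseHi n)).card : ℝ)
      + (((Finset.Icc 1 M).biUnion fun m =>
          (Finset.Icc 1 (2^(⌊(m:ℝ)*β⌋.toNat))).biUnion fun j =>
            faceCover n K (rectLo n α β m j) (rectHi n β m j)).card : ℝ)
      + ((boxCover n K (fun _ => 0) (fun _ => (2:ℝ)^(-(M:ℝ)))).card : ℝ) := by
    unfold totalCover
    have h1 := Finset.card_union_le
      (faceCover n K (baseLo n) (baseHi n) ∪
        ((Finset.Icc 1 M).biUnion fun m =>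
          (Finset.Icc 1 (2^(⌊(m:ℝ)*β⌋.toNat))).biUnion fun j =>
            faceCover n K (rectLo n α β m j) (rectHi n β m j)))
      (boxCover n K (fun _ => 0) (fun _ => (2:ℝ)^(-(M:ℝ))))
    have h2 := Finset.card_union_le (faceCover n K (baseLo n) (baseHi n))
      ((Finset.Icc 1 M).biUnion fun m =>
        (Finset.Icc 1 (2^(⌊(m:ℝ)*β⌋.toNat))).biUnion fun j =>
          faceCover n K (rectLo n α β m j) (rectHi n β m j))
    have := le_trans h1 (Nat.add_le_add_right h2 _)
    exact_mod_cast this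
  have hb1 : ((faceCover n K (baseLo n) (baseHi n)).card : ℝ) ≤ (2*((n:ℝ)+1)) * (G * P) :=
    le_trans hbase (mul_le_mul_of_nonneg_left (hGP _ e1) (by positivity))
  have hb2 : (((Finset.Icc 1 M).biUnion fun m =>
      (Finset.Icc 1 (2^(⌊(m:ℝ)*β⌋.toNat))).biUnion fun j =>
        faceCover n K (rectLo n α β m j) (rectHi n β m j)).card : ℝ)
      ≤ (k:ℝ) * (2*((n:ℝ)+1)) * (G * P) :=
    le_trans hlevel (mul_le_mul_of_nonneg_left (hGP _ e2) (by positivity))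
  have hb3 : ((boxCover n K (fun _ => 0) (fun _ => (2:ℝ)^(-(M:ℝ)))).card : ℝ) ≤ 1 * (G * P) :=
    le_trans hbig (by rw [one_mul]; exact hGP _ e3)
  have hGPpos : 0 < G * P := by positivity
  calc ((totalCover n α β k).card : ℝ)
      ≤ (2*((n:ℝ)+1)) * (G * P) + (k:ℝ) * (2*((n:ℝ)+1)) * (G * P) + 1 * (G * P) := by
        linarith [hsplit, hb1, hb2, hb3]
    _ ≤ ((2*((n:ℝ)+1) + 1) * ((k:ℝ)+2)) * (G * P) := by
        have hpos : (0:ℝ) ≤ ((k:ℝ)+2*(n:ℝ)+3) * (G * P) := by positivity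
        nlinarith [hpos]
    _ = (2*((n:ℝ)+1) + 1) * G * ((k:ℝ)+2) * P := by ring

lemma spacing_anti (hβ : 0 ≤ β) {m' m : ℕ} (h : m' ≤ m) :
    fractalSpacing β m ≤ fractalSpacing β m' := by
  apply two_rpow_mono
  have h1 : (m':ℝ) ≤ (m:ℝ) := by exact_mod_cast h
  have h2 : (⌊(m':ℝ)*β⌋:ℝ) ≤ (⌊(m:ℝ)*β⌋:ℝ) := by
    exact_mod_cast Int.floor_mono (by nlinarith : (m':ℝ)*β ≤ (m:ℝ)*β)
  linarith

lemma point_mono (hβ : 0 ≤ β) (m : ℕ) {j j' : ℕ} (h : j' ≤ j) :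
    fractalPoint β m j' ≤ fractalPoint β m j := by
  unfold fractalPoint
  have : (j':ℝ) ≤ (j:ℝ) := by exact_mod_cast h
  nlinarith [spacing_pos β m]

lemma qnot (hα : 1 ≤ α) (hβ : 0 ≤ β) {m j : ℕ} (hm1 : 1 ≤ m) (hj1 : 1 ≤ j)
    (hj2 : j ≤ 2^(⌊(m:ℝ)*β⌋.toNat)) {t : ℝ} (ht0 : 0 < t)
    (ht : t < fractalSpacing β m / 2) {x : EuclideanSpace ℝ (Fin (n+1))}
    (hx0 : x 0 = fractalPoint β m j + t) (hxl : 0 < x (Fin.last n)) :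
    x ∉ fractalDomain n α β := by
  intro hmem
  rcases hmem with hb | hr
  · exact absurd hb.2.2 (by linarith)
  · simp only [Set.mem_iUnion] at hr
    obtain ⟨m', hm'1, j', hj'1, hj'2, hmem⟩ := hr
    have hx0mem := hmem.1
    rw [hx0] at hx0mem
    obtain ⟨hlo, hhi⟩ := hx0mem
    have haC' := width_le_half_spacing hβ hα m'
    have haC := width_le_half_spacing hβ hα m
    have hsp' := spacing_pos β m'
    have hsp := spacing_pos β m
    rcases lt_trichotomy m' m with hlt | heq | hgt
    · -- m' < m : x0 too small to be in a level-m' rectangle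
      have h1 : fractalPoint β m j ≤ (2:ℝ)^(-(m:ℝ)+1) := point_le hβ hj2
      have h2 : (2:ℝ)^(-(m:ℝ)+1) ≤ (2:ℝ)^(-(m':ℝ)) := by
        apply two_rpow_mono
        have : (m':ℝ) + 1 ≤ (m:ℝ) := by exact_mod_cast hlt
        linarith
      have h3 : fractalSpacing β m ≤ fractalSpacing β m' := spacing_anti hβ hlt.le
      have h4 : (2:ℝ)^(-(m':ℝ)) + fractalSpacing β m' ≤ fractalPoint β m' j' :=
        point_ge hβ hj'1
      linarith
    · -- m' = m : strictly between rectangles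
      subst heq
      rcases le_or_gt j' j with hjj | hjj
      · have := point_mono hβ m' hjj
        linarith
      · have hj1' : fractalPoint β m' (j+1) ≤ fractalPoint β m' j' := point_mono hβ m' hjj
        have hstep : fractalPoint β m' (j+1) = fractalPoint β m' j + fractalSpacing β m' := by
          unfold fractalPoint
          push_cast
          ring
        linarith
    · -- m' > m : x0 too large
      have h1 : fractalPoint β m' j' ≤ (2:ℝ)^(-(m':ℝ)+1) := point_le hβ hj'2
      have h2 : (2:ℝ)^(-(m':ℝ)+1) ≤ (2:ℝ)^(-(m:ℝ)) := by
        apply two_rpow_mono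
        have : (m:ℝ) + 1 ≤ (m':ℝ) := by exact_mod_cast hgt
        linarith
      have h3 : (2:ℝ)^(-(m:ℝ)) + fractalSpacing β m ≤ fractalPoint β m j := point_ge hβ hj1
      linarith

def lpt (n : ℕ) (β : ℝ) (k m j : ℕ) (v : Fin n → ℕ) : EuclideanSpace ℝ (Fin (n+1)) :=
  WithLp.toLp 2 (fun i : Fin (n+1) => if h : i = 0 then fractalPoint β m j
    else (v (i.pred h) : ℝ) * (2:ℝ)^(1-(k:ℝ)))

lemma lpt_zero (β : ℝ) (k m j : ℕ) (v : Fin n → ℕ) : lpt n β k m j v 0 = fractalPoint β m j := by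
  simp [lpt]

lemma lpt_succ (β : ℝ) (k m j : ℕ) (v : Fin n → ℕ) (l : Fin n) :
    lpt n β k m j v l.succ = (v l : ℝ) * (2:ℝ)^(1-(k:ℝ)) := by
  simp [lpt, Fin.succ_ne_zero]

lemma coord_dist_le (x y : EuclideanSpace ℝ (Fin (n+1))) (i : Fin (n+1)) :
    dist (x i) (y i) ≤ dist x y := by
  rw [EuclideanSpace.dist_eq]
  exact le_trans (le_of_eq (Real.sqrt_sq dist_nonneg).symm)
    (Real.sqrt_le_sqrt (Finset.single_le_sum (f := fun l => dist (x l) (y l)^2)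
      (fun l _ => sq_nonneg _) (Finset.mem_univ i)))

lemma dist_update_zero (x : EuclideanSpace ℝ (Fin (n+1))) (c : ℝ) :
    dist x (WithLp.toLp 2 (Function.update x 0 c)) = |x 0 - c| := by
  rw [EuclideanSpace.dist_eq]
  simp only [PiLp.toLp_apply]
  have hsum : ∑ i, dist (x i) (Function.update x 0 c i)^2
      = dist (x 0) (Function.update x 0 c 0)^2 := by
    apply Finset.sum_eq_single_of_mem 0 (Finset.mem_univ 0)
    intro i _ hi
    rw [Function.update_of_ne hi]
    simp
  rw [hsum, Function.update_self, Real.sqrt_sq dist_nonneg, Real.dist_eq]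

lemma fin_last_ne_zero (hn : 1 ≤ n) : (Fin.last n) ≠ (0 : Fin (n+1)) := by
  intro h
  have := congrArg Fin.val h
  simp [Fin.last] at this
  omega

lemma lpt_mem_domain (hβ : 0 ≤ β) {k m j : ℕ} {v : Fin n → ℕ}
    (hm1 : 1 ≤ m) (hj1 : 1 ≤ j) (hj2 : j ≤ 2^(⌊(m:ℝ)*β⌋.toNat))
    (hmk1 : m + 1 ≤ k) (hv : ∀ l, 1 ≤ v l ∧ v l ≤ 2^(k-1-m)) :
    lpt n β k m j v ∈ fractalRect n α β m j := by
  constructor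
  · rw [lpt_zero]
    have := width_nonneg (α := α) (β := β) (m := m)
    constructor <;> [linarith; exact le_refl _]
  · intro i hi
    have hl : lpt n β k m j v i = (v (i.pred hi) : ℝ) * (2:ℝ)^(1-(k:ℝ)) := by
      simp [lpt, hi]
    rw [hl]
    constructor
    · positivity
    · have hvl := (hv (i.pred hi)).2
      have hcast : ((v (i.pred hi) : ℕ) : ℝ) ≤ ((2^(k-1-m) : ℕ) : ℝ) := by exact_mod_cast hvl
      have hpow : ((2^(k-1-m) : ℕ) : ℝ) = (2:ℝ)^(((k-1-m : ℕ)):ℝ) := by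
        rw [Nat.cast_pow, Real.rpow_natCast]
        norm_num
      have hexp : (((k-1-m : ℕ)):ℝ) = (k:ℝ) - 1 - (m:ℝ) := by
        have h : (k - 1 - m : ℕ) = k - (m+1) := by omega
        rw [h, Nat.cast_sub (by omega)]
        push_cast
        ring
      calc (v (i.pred hi) : ℝ) * (2:ℝ)^(1-(k:ℝ))
          ≤ (2:ℝ)^((k:ℝ)-1-(m:ℝ)) * (2:ℝ)^(1-(k:ℝ)) := by
            apply mul_le_mul_of_nonneg_right _ (two_rpow_pos _).le
            rw [← hexp, ← hpow]
            exact hcast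
        _ = (2:ℝ)^(-(m:ℝ)) := by rw [← two_rpow_add]; ring_nf

lemma lpt_mem_frontier (hn : 1 ≤ n) (hα : 1 ≤ α) (hβ : 0 ≤ β) {k m j : ℕ} {v : Fin n → ℕ}
    (hm1 : 1 ≤ m) (hj1 : 1 ≤ j) (hj2 : j ≤ 2^(⌊(m:ℝ)*β⌋.toNat))
    (hmk1 : m + 1 ≤ k) (hv : ∀ l, 1 ≤ v l ∧ v l ≤ 2^(k-1-m)) :
    lpt n β k m j v ∈ frontier (fractalDomain n α β) := by
  have hmemT : lpt n β k m j v ∈ fractalDomain n α β := by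
    right
    simp only [Set.mem_iUnion]
    exact ⟨m, hm1, j, hj1, hj2, lpt_mem_domain (α := α) hβ hm1 hj1 hj2 hmk1 hv⟩
  constructor
  · exact subset_closure hmemT
  · have hcl : lpt n β k m j v ∈ closure ((fractalDomain n α β)ᶜ) := by
      rw [Metric.mem_closure_iff]
      intro ε hε
      set t := min (ε/2) (fractalSpacing β m / 4) with htdef
      have hsp := spacing_pos β m
      have ht0 : 0 < t := lt_min (by linarith) (by linarith)
      have ht2 : t < fractalSpacing β m / 2 :=
        lt_of_le_of_lt (min_le_right _ _) (by linarith)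
      refine ⟨WithLp.toLp 2 (Function.update (lpt n β k m j v) 0 (fractalPoint β m j + t)), ?_, ?_⟩
      · apply qnot hα hβ hm1 hj1 hj2 ht0 ht2
        · exact Function.update_self (0 : Fin (n+1)) (fractalPoint β m j + t) (lpt n β k m j v).ofLp
        · rw [WithLp.ofLp_toLp, Function.update_of_ne (fin_last_ne_zero hn)]
          have hlast : lpt n β k m j v (Fin.last n)
              = (v ((Fin.last n).pred (fin_last_ne_zero hn)) : ℝ) * (2:ℝ)^(1-(k:ℝ)) := by
            simp [lpt, fin_last_ne_zero hn]
          rw [hlast]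
          have hv1 := (hv ((Fin.last n).pred (fin_last_ne_zero hn))).1
          have h1v : (1:ℝ) ≤ (v ((Fin.last n).pred (fin_last_ne_zero hn)) : ℝ) := by
            exact_mod_cast hv1
          have h2p := two_rpow_pos (1-(k:ℝ))
          positivity
      · rw [dist_update_zero, lpt_zero]
        have habs : |fractalPoint β m j - (fractalPoint β m j + t)| = t := by
          rw [abs_sub_comm]
          simp [abs_of_pos ht0]
        rw [habs]
        exact lt_of_le_of_lt (min_le_left _ _) (by linarith)
    intro hint
    rw [closure_compl] at hcl
    exact hcl hint

lemma one_le_abs_cast {a b : ℕ} (h : a ≠ b) : (1:ℝ) ≤ |(a:ℝ) - (b:ℝ)| := by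
  rcases lt_or_gt_of_ne h with hl | hl
  · have h1 : (a:ℝ) + 1 ≤ (b:ℝ) := by exact_mod_cast hl
    rw [abs_sub_comm, abs_of_pos (by linarith)]
    linarith
  · have h1 : (b:ℝ) + 1 ≤ (a:ℝ) := by exact_mod_cast hl
    rw [abs_of_pos (by linarith)]
    linarith

lemma spacing_ge (hβ : 0 ≤ β) {k m : ℕ} (hk1 : 1 ≤ k)
    (hmk : m + ⌊(m:ℝ)*β⌋.toNat + 1 ≤ k) :
    (2:ℝ)^(1-(k:ℝ)) ≤ fractalSpacing β m := by
  rw [fractalSpacing]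
  apply two_rpow_mono
  have hcast : ((m + ⌊(m:ℝ)*β⌋.toNat + 1 : ℕ) : ℝ) ≤ (k:ℝ) := by exact_mod_cast hmk
  push_cast at hcast
  rw [toNat_floor_cast hβ] at hcast
  linarith

lemma lpt_sep (hβ : 0 ≤ β) {k m : ℕ} (hk1 : 1 ≤ k)
    (hmk : m + ⌊(m:ℝ)*β⌋.toNat + 1 ≤ k) {j j' : ℕ} {v v' : Fin n → ℕ}
    (hne : (j, v) ≠ (j', v')) :
    (2:ℝ)^(1-(k:ℝ)) ≤ dist (lpt n β k m j v) (lpt n β k m j' v') := by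
  have hsep := spacing_ge hβ hk1 hmk
  have h2p := two_rpow_pos (1-(k:ℝ))
  by_cases hj : j = j'
  · subst hj
    have hvv : v ≠ v' := fun h => hne (by rw [h])
    obtain ⟨l, hl⟩ := Function.ne_iff.mp hvv
    have hcoord : dist (lpt n β k m j v l.succ) (lpt n β k m j v' l.succ)
        = |(v l : ℝ) - (v' l : ℝ)| * (2:ℝ)^(1-(k:ℝ)) := by
      rw [lpt_succ, lpt_succ, Real.dist_eq, ← sub_mul, abs_mul,
        abs_of_pos h2p]
    have h1 := one_le_abs_cast hl
    calc (2:ℝ)^(1-(k:ℝ)) = 1 * (2:ℝ)^(1-(k:ℝ)) := (one_mul _).symm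
      _ ≤ |(v l : ℝ) - (v' l : ℝ)| * (2:ℝ)^(1-(k:ℝ)) :=
          mul_le_mul_of_nonneg_right h1 h2p.le
      _ = dist (lpt n β k m j v l.succ) (lpt n β k m j v' l.succ) := hcoord.symm
      _ ≤ _ := coord_dist_le _ _ _
  · have hcoord : dist (lpt n β k m j v 0) (lpt n β k m j' v' 0)
        = |(j : ℝ) - (j' : ℝ)| * fractalSpacing β m := by
      rw [lpt_zero, lpt_zero, Real.dist_eq]
      unfold fractalPoint
      rw [show (2:ℝ)^(-(m:ℝ)) + (j:ℝ) * fractalSpacing β m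
          - ((2:ℝ)^(-(m:ℝ)) + (j':ℝ) * fractalSpacing β m)
          = ((j:ℝ) - (j':ℝ)) * fractalSpacing β m by ring, abs_mul,
        abs_of_pos (spacing_pos β m)]
    have h1 := one_le_abs_cast hj
    calc (2:ℝ)^(1-(k:ℝ)) ≤ fractalSpacing β m := hsep
      _ = 1 * fractalSpacing β m := (one_mul _).symm
      _ ≤ |(j : ℝ) - (j' : ℝ)| * fractalSpacing β m :=
          mul_le_mul_of_nonneg_right h1 (spacing_pos β m).le
      _ = dist (lpt n β k m j v 0) (lpt n β k m j' v' 0) := hcoord.symm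
      _ ≤ _ := coord_dist_le _ _ _

lemma coverSet_nonempty (hα : 1 ≤ α) (hβ : 0 ≤ β) (k : ℕ) :
    {N : ℕ | ∃ F : Finset (Set (EuclideanSpace ℝ (Fin (n + 1)))),
      F.card = N ∧ frontier (fractalDomain n α β) ⊆ ⋃₀ (F : Set _) ∧
      ∀ U ∈ F, EMetric.diam U ≤ ENNReal.ofReal ((2 : ℝ) ^ (-(k : ℝ)))}.Nonempty :=
  ⟨(totalCover n α β k).card, totalCover n α β k, rfl, totalCover_covers hα hβ k,
    fun U hU => totalCover_diam hU⟩

lemma covering_upper (hα : 1 ≤ α) (hβ : 0 ≤ β) (k : ℕ) :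
    dyadicCoveringNumber (frontier (fractalDomain n α β)) k ≤ (totalCover n α β k).card :=
  Nat.sInf_le ⟨totalCover n α β k, rfl, totalCover_covers hα hβ k,
    fun U hU => totalCover_diam hU⟩

lemma covering_lower (hn : 1 ≤ n) (hα : 1 ≤ α) (hβ : 0 ≤ β) {k m : ℕ}
    (hm1 : 1 ≤ m) (hmk : m + ⌊(m:ℝ)*β⌋.toNat + 1 ≤ k) :
    2^(⌊(m:ℝ)*β⌋.toNat + (k-1-m)*n) ≤
      dyadicCoveringNumber (frontier (fractalDomain n α β)) k := by
  have hk1 : 1 ≤ k := by omega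
  have hmk1 : m + 1 ≤ k := by omega
  obtain ⟨F, hFcard, hFcov, hFdiam⟩ :=
    Nat.sInf_mem (coverSet_nonempty (n := n) hα hβ k)
  rw [dyadicCoveringNumber, ← hFcard]
  set I := (Finset.Icc 1 (2^(⌊(m:ℝ)*β⌋.toNat))) ×ˢ
    (Fintype.piFinset fun _ : Fin n => Finset.Icc 1 (2^(k-1-m))) with hI
  have hIcard : I.card = 2^(⌊(m:ℝ)*β⌋.toNat + (k-1-m)*n) := by
    rw [hI, Finset.card_product, Fintype.card_piFinset]
    simp only [Nat.card_Icc]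
    rw [Finset.prod_const, Finset.card_univ, Fintype.card_fin]
    rw [pow_add, pow_mul]
    norm_num
  rw [← hIcard]
  have hmem : ∀ p ∈ I, lpt n β k m p.1 p.2 ∈ frontier (fractalDomain n α β) := by
    intro p hp
    rw [hI, Finset.mem_product] at hp
    obtain ⟨hp1, hp2⟩ := hp
    rcases Finset.mem_Icc.mp hp1 with ⟨hj1, hj2⟩
    rw [Fintype.mem_piFinset] at hp2
    exact lpt_mem_frontier hn hα hβ hm1 hj1 hj2 hmk1
      (fun l => Finset.mem_Icc.mp (hp2 l))
  classical
  set g : (ℕ × (Fin n → ℕ)) → Set (EuclideanSpace ℝ (Fin (n+1))) := fun p =>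
    if h : ∃ U ∈ F, lpt n β k m p.1 p.2 ∈ U then h.choose else ∅ with hg
  have hgmem : ∀ p ∈ I, g p ∈ F ∧ lpt n β k m p.1 p.2 ∈ g p := by
    intro p hp
    have hex : ∃ U ∈ F, lpt n β k m p.1 p.2 ∈ U := by
      have := hFcov (hmem p hp)
      rw [Set.mem_sUnion] at this
      obtain ⟨U, hU, hxU⟩ := this
      exact ⟨U, hU, hxU⟩
    rw [hg]
    simp only [dif_pos hex]
    exact ⟨hex.choose_spec.1, hex.choose_spec.2⟩
  apply Finset.card_le_card_of_injOn g (fun p hp => (hgmem p hp).1)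
  intro p hp q hq hpq
  by_contra hne
  have h1 := (hgmem p hp).2
  have h2 := (hgmem q hq).2
  rw [hpq] at h1
  have hdiam := hFdiam (g q) (hgmem q hq).1
  have hedist := EMetric.edist_le_diam_of_mem h1 h2
  have hdist : dist (lpt n β k m p.1 p.2) (lpt n β k m q.1 q.2) ≤ (2:ℝ)^(-(k:ℝ)) := by
    have := le_trans hedist hdiam
    rw [edist_dist] at this
    exact (ENNReal.ofReal_le_ofReal_iff (two_rpow_pos _).le).mp this
  have hsep : (2:ℝ)^(1-(k:ℝ)) ≤ dist (lpt n β k m p.1 p.2) (lpt n β k m q.1 q.2) := by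
    apply lpt_sep hβ hk1 hmk
    intro hcontra
    apply hne
    have : p = (p.1, p.2) := rfl
    rw [this, hcontra]
  have hdouble : (2:ℝ)^(1-(k:ℝ)) = 2 * (2:ℝ)^(-(k:ℝ)) := by
    rw [show (1-(k:ℝ)) = 1 + (-(k:ℝ)) by ring, two_rpow_add, Real.rpow_one]
  have := two_rpow_pos (-(k:ℝ))
  linarith

set_option maxHeartbeats 1000000 in
theorem main_thm (hn : 1 ≤ n) (hα : 1 ≤ α) (hβ : (n : ℝ) ≤ β) :
    Filter.limsup
      (fun k : ℕ =>
        Real.log (dyadicCoveringNumber (frontier (fractalDomain n α β)) k) /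
          ((k : ℝ) * Real.log 2))
      Filter.atTop = ((n : ℝ) + 1) * β / (β + 1) := by
  have hβ0 : (0:ℝ) ≤ β := le_trans (by exact_mod_cast Nat.zero_le n) hβ
  have hβ1 : (0:ℝ) < β + 1 := by linarith
  have hn1 : (1:ℝ) ≤ (n:ℝ) := by exact_mod_cast hn
  have hlog2 : (0:ℝ) < Real.log 2 := Real.log_pos (by norm_num)
  set D : ℝ := ((n:ℝ)+1)*β/(β+1) with hD
  set Nk : ℕ → ℕ := fun k => dyadicCoveringNumber (frontier (fractalDomain n α β)) k
    with hNk
  set f : ℕ → ℝ := fun k => Real.log (Nk k) / ((k:ℝ) * Real.log 2) with hf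
  set C₁ : ℝ := (2*((n:ℝ)+1) + 1) * (2:ℝ)^(β + ((n:ℝ)+2)*((n:ℝ)+1)) with hC₁
  have hC₁pos : 0 < C₁ := by positivity
  have hDle : D ≤ (n:ℝ)+1 := by
    rw [hD, div_le_iff₀ hβ1]
    nlinarith
  have hDnn : 0 ≤ D := by positivity
  -- the eventual two-sided bound
  have hbound : ∀ k : ℕ, (β:ℝ) + 2 ≤ (k:ℝ) →
      (D - (β+3)/(k:ℝ) ≤ f k ∧
       f k ≤ D + ((Real.log C₁ + Real.log 3)/Real.log 2)/(k:ℝ)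
            + (1/Real.log 2) * (Real.log (k:ℝ) / (k:ℝ))) := by
    intro k hkβ
    have hk1 : 1 ≤ k := by
      by_contra h
      push_neg at h
      interval_cases k
      simp at hkβ
      linarith
    have hkpos : (0:ℝ) < (k:ℝ) := by
      have : (1:ℝ) ≤ (k:ℝ) := by exact_mod_cast hk1
      linarith
    have hklog : 0 < (k:ℝ) * Real.log 2 := by positivity
    -- choose m
    set x : ℝ := ((k:ℝ)-1)/(β+1) with hx
    have hx1 : (1:ℝ) ≤ x := by
      rw [hx, le_div_iff₀ hβ1]
      linarith
    set m : ℕ := ⌊x⌋₊ with hm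
    have hm1 : 1 ≤ m := Nat.le_floor (by exact_mod_cast hx1)
    have hmle : (m:ℝ) ≤ x := Nat.floor_le (by linarith)
    have hmge : x - 1 < (m:ℝ) := by
      have := Nat.lt_floor_add_one x
      linarith
    have hflr : (⌊(m:ℝ)*β⌋:ℝ) ≤ (m:ℝ)*β := Int.floor_le _
    have hflr2 : (m:ℝ)*β - 1 ≤ (⌊(m:ℝ)*β⌋:ℝ) := by
      linarith [Int.lt_floor_add_one ((m:ℝ)*β)]
    have hmk : m + ⌊(m:ℝ)*β⌋.toNat + 1 ≤ k := by
      have hcast : (m:ℝ) + ((⌊(m:ℝ)*β⌋.toNat:ℕ):ℝ) + 1 ≤ (k:ℝ) := by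
        rw [toNat_floor_cast hβ0]
        have hmx : (m:ℝ)*(β+1) ≤ x*(β+1) :=
          mul_le_mul_of_nonneg_right hmle (by linarith)
        have hxx : x*(β+1) = (k:ℝ)-1 := by
          rw [hx]; field_simp
        nlinarith
      exact_mod_cast hcast
    have hmk1 : m + 1 ≤ k := by omega
    have hmcast : ((k-1-m:ℕ):ℝ) = (k:ℝ)-1-(m:ℝ) := by
      have h : (k - 1 - m : ℕ) = k - (m+1) := by omega
      rw [h, Nat.cast_sub (by omega)]
      push_cast
      ring
    -- lower bound for Nk
    have hNlow := covering_lower hn hα hβ0 hm1 hmk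
    have hE : (k:ℝ)*D - (β+3) ≤ ((⌊(m:ℝ)*β⌋.toNat + (k-1-m)*n : ℕ):ℝ) := by
      push_cast
      rw [toNat_floor_cast hβ0, hmcast]
      have hxD : x*(β+1) = (k:ℝ)-1 := by rw [hx]; field_simp
      have hmono := mul_le_mul_of_nonneg_right
        (show x - 1 ≤ (m:ℝ) by linarith) (show (0:ℝ) ≤ β - n by linarith)
      have hkD : (k:ℝ)*D*(β+1) = (k:ℝ)*((n:ℝ)+1)*β := by
        rw [hD]; field_simp
      nlinarith [hDle, hkpos, hβ1]
    have hNlowR : (2:ℝ)^((k:ℝ)*D - (β+3)) ≤ (Nk k : ℝ) := by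
      have h1 : ((2^(⌊(m:ℝ)*β⌋.toNat + (k-1-m)*n) : ℕ) : ℝ) ≤ (Nk k : ℝ) := by
        exact_mod_cast hNlow
      have h2 : ((2^(⌊(m:ℝ)*β⌋.toNat + (k-1-m)*n) : ℕ) : ℝ)
          = (2:ℝ)^(((⌊(m:ℝ)*β⌋.toNat + (k-1-m)*n : ℕ):ℝ)) := by
        rw [Nat.cast_pow, Real.rpow_natCast]
        norm_num
      exact le_trans (le_trans (two_rpow_mono hE) (le_of_eq h2.symm)) h1
    have hNpos : (0:ℝ) < (Nk k : ℝ) := lt_of_lt_of_le (two_rpow_pos _) hNlowR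
    -- upper bound for Nk
    have hNupR : (Nk k : ℝ) ≤ C₁ * ((k:ℝ)+2) * (2:ℝ)^((k:ℝ)*D) := by
      have h1 : (Nk k : ℝ) ≤ ((totalCover n α β k).card : ℝ) := by
        exact_mod_cast covering_upper hα hβ0 k
      have h2 := totalCover_card_le hn hα hβ hk1
      rw [hC₁]
      calc (Nk k : ℝ) ≤ ((totalCover n α β k).card : ℝ) := h1
        _ ≤ (2*((n:ℝ)+1) + 1) * (2:ℝ)^(β + ((n:ℝ)+2)*((n:ℝ)+1)) * ((k:ℝ)+2) *
            (2:ℝ)^((k:ℝ) * (((n:ℝ)+1)*β/(β+1))) := h2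
        _ = (2*((n:ℝ)+1) + 1) * (2:ℝ)^(β + ((n:ℝ)+2)*((n:ℝ)+1)) * ((k:ℝ)+2) *
            (2:ℝ)^((k:ℝ)*D) := by rw [hD]
    constructor
    · -- lower bound for f
      have hlog : ((k:ℝ)*D - (β+3)) * Real.log 2 ≤ Real.log (Nk k) := by
        have := Real.log_le_log (two_rpow_pos ((k:ℝ)*D - (β+3))) hNlowR
        rwa [Real.log_rpow (by norm_num)] at this
      rw [hf]
      simp only
      rw [le_div_iff₀ hklog]
      calc (D - (β+3)/(k:ℝ)) * ((k:ℝ) * Real.log 2)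
          = ((k:ℝ)*D - (β+3)) * Real.log 2 := by field_simp
        _ ≤ Real.log (Nk k) := hlog
    · -- upper bound for f
      have hlogup : Real.log (Nk k) ≤ Real.log C₁ + Real.log ((k:ℝ)+2)
          + (k:ℝ)*D * Real.log 2 := by
        have h1 := Real.log_le_log hNpos hNupR
        have h2 : Real.log (C₁ * ((k:ℝ)+2) * (2:ℝ)^((k:ℝ)*D))
            = Real.log C₁ + Real.log ((k:ℝ)+2) + (k:ℝ)*D * Real.log 2 := by
          rw [Real.log_mul (by positivity) (by positivity),
            Real.log_mul (by positivity) (by positivity),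
            Real.log_rpow (by norm_num)]
        linarith
      have hlog3 : Real.log ((k:ℝ)+2) ≤ Real.log 3 + Real.log (k:ℝ) := by
        have h1 : (k:ℝ)+2 ≤ 3*(k:ℝ) := by linarith
        have := Real.log_le_log (by linarith) h1
        rwa [Real.log_mul (by norm_num) (by linarith)] at this
      rw [hf]
      simp only
      rw [div_le_iff₀ hklog]
      have hgoal : (D + ((Real.log C₁ + Real.log 3)/Real.log 2)/(k:ℝ)
            + (1/Real.log 2) * (Real.log (k:ℝ) / (k:ℝ))) * ((k:ℝ) * Real.log 2)
          = (k:ℝ)*D*Real.log 2 + Real.log C₁ + Real.log 3 + Real.log (k:ℝ) := by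
        field_simp
        ring
      rw [hgoal]
      linarith
  -- squeeze
  have hlimlow : Filter.Tendsto (fun k : ℕ => D - (β+3)/(k:ℝ)) Filter.atTop (nhds D) := by
    have := tendsto_const_div_atTop_nhds_zero_nat (β+3)
    have h2 := Filter.Tendsto.sub (tendsto_const_nhds (x := D)) this
    simpa using h2
  have hlimup : Filter.Tendsto (fun k : ℕ => D + ((Real.log C₁ + Real.log 3)/Real.log 2)/(k:ℝ)
      + (1/Real.log 2) * (Real.log (k:ℝ) / (k:ℝ))) Filter.atTop (nhds D) := by
    have h1 := tendsto_const_div_atTop_nhds_zero_nat ((Real.log C₁ + Real.log 3)/Real.log 2)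
    have h2 : Filter.Tendsto (fun k : ℕ => Real.log (k:ℝ) / (k:ℝ)) Filter.atTop (nhds 0) := by
      have h := Real.isLittleO_log_id_atTop.tendsto_div_nhds_zero
      have h' : Filter.Tendsto (fun x : ℝ => Real.log x / x) Filter.atTop (nhds 0) := by
        simpa using h
      exact h'.comp tendsto_natCast_atTop_atTop
    have h3 := Filter.Tendsto.const_mul (1/Real.log 2) h2
    have h4 := Filter.Tendsto.add (Filter.Tendsto.add (tendsto_const_nhds (x := D)) h1) h3
    simpa using h4
  have htend : Filter.Tendsto f Filter.atTop (nhds D) := by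
    apply tendsto_of_tendsto_of_tendsto_of_le_of_le' hlimlow hlimup
    · rw [Filter.eventually_atTop]
      refine ⟨⌈(β:ℝ)+2⌉₊, fun k hk => ?_⟩
      have : (β:ℝ) + 2 ≤ (k:ℝ) := le_trans (Nat.le_ceil _) (by exact_mod_cast hk)
      exact (hbound k this).1
    · rw [Filter.eventually_atTop]
      refine ⟨⌈(β:ℝ)+2⌉₊, fun k hk => ?_⟩
      have : (β:ℝ) + 2 ≤ (k:ℝ) := le_trans (Nat.le_ceil _) (by exact_mod_cast hk)
      exact (hbound k this).2
  exact htend.limsup_eq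

end

/-- the upper Minkowski dimension of `S_{α,β} = ∂T_{α,β}`
equals `(n+1)β/(β+1)`, computed as
`limsup_{k→∞} log N_k(S_{α,β})/(k log 2)`. -/
theorem fractal_boundary_minkowski_dimension
    (n : ℕ) (hn : 1 ≤ n) (α β : ℝ) (hα : 1 ≤ α) (hβ : (n : ℝ) ≤ β) :
    Filter.limsup
      (fun k : ℕ =>
        Real.log (dyadicCoveringNumber (frontier (fractalDomain n α β)) k) /
          ((k : ℝ) * Real.log 2))
      Filter.atTop = ((n : ℝ) + 1) * β / (β + 1) := by
  exact main_thm hn hα hβ
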